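/- Let a, b ∈ ℂⁿ. Then there exist Z, W ∈ ℂⁿ with ⟨Z,W⟩ = 0 and ‖Z‖ = ‖W‖ such that Z ∧ W = a ∧ b in the exterior algebra of ℂⁿ (equivalently, Z_i·W_j − Z_j·W_i = a_i·b_j − a_j·b_i for all i, j). -/

import Mathlib

/-- Every decomposable bivector `a ∧ b` on `ℂⁿ` is represented by a pair `(Z, W)` of
orthogonal vectors of equal norm: `Z ∧ W = a ∧ b` (Plücker coordinates agree). -/
theorem decomposable_has_momentum_zero_rep (n : ℕ) (a b : Fin n → ℂ) :
    ∃ Z W : EuclideanSpace ℂ (Fin n),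
      (∑ i, Z i * (starRingEnd ℂ) (W i)) = 0 ∧ ‖Z‖ = ‖W‖ ∧
        ∀ i j, Z i * W j - Z j * W i = a i * b j - a j * b i := by
  by_cases ha : a = 0
  · exact ⟨0, 0, by simp, by simp, by simp [ha]⟩
  -- Gram–Schmidt: b' := b - conj(d) • a is orthogonal to a
  set S : ℂ := ∑ i, a i * (starRingEnd ℂ) (b i) with hS
  set A : ℂ := ∑ i, a i * (starRingEnd ℂ) (a i) with hAdef
  set Asum : ℝ := ∑ i, ‖a i‖ ^ 2 with hAsum
  have hA : A = (Asum : ℂ) := by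
    rw [hAdef, hAsum]
    push_cast
    refine Finset.sum_congr rfl fun i _ => ?_
    rw [Complex.mul_conj, Complex.normSq_eq_norm_sq]
    push_cast
    ring
  have hApos : (0:ℝ) < Asum := by
    have : ∃ i, a i ≠ 0 := by
      by_contra h
      push_neg at h
      exact ha (funext h)
    obtain ⟨i, hi⟩ := this
    refine Finset.sum_pos' (fun j _ => by positivity) ⟨i, Finset.mem_univ i, ?_⟩
    exact pow_pos (norm_pos_iff.mpr hi) 2
  have hA0 : A ≠ 0 := by
    rw [hA]
    exact_mod_cast ne_of_gt hApos
  set d : ℂ := S / A with hd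
  set b' : Fin n → ℂ := fun i => b i - (starRingEnd ℂ) d * a i with hb'def
  have horth : ∑ i, a i * (starRingEnd ℂ) (b' i) = 0 := by
    have : ∑ i, a i * (starRingEnd ℂ) (b' i)
        = S - d * A := by
      rw [hS, hAdef, Finset.mul_sum, ← Finset.sum_sub_distrib]
      refine Finset.sum_congr rfl fun i _ => ?_
      simp only [hb'def, map_sub, map_mul, RingHomCompTriple.comp_apply,
        RingHom.id_apply, Complex.conj_conj]
      ring
    rw [this, hd, div_mul_cancel₀ _ hA0, sub_self]
  have hwedge : ∀ i j, a i * b' j - a j * b' i = a i * b j - a j * b i := by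
    intro i j
    simp only [hb'def]
    ring
  by_cases hb' : b' = 0
  · refine ⟨0, 0, by simp, by simp, fun i j => ?_⟩
    have := hwedge i j
    rw [hb'] at this
    simpa using this
  -- main case: rescale
  set Bsum : ℝ := ∑ i, ‖b' i‖ ^ 2 with hBsum
  have hBpos : (0:ℝ) < Bsum := by
    have : ∃ i, b' i ≠ 0 := by
      by_contra h
      push_neg at h
      exact hb' (funext h)
    obtain ⟨i, hi⟩ := this
    refine Finset.sum_pos' (fun j _ => by positivity) ⟨i, Finset.mem_univ i, ?_⟩
    exact pow_pos (norm_pos_iff.mpr hi) 2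
  set r : ℝ := (Bsum / Asum) ^ ((1:ℝ)/4) with hr
  have hrpos : 0 < r := Real.rpow_pos_of_pos (div_pos hBpos hApos) _
  have hr4 : r ^ (4:ℕ) = Bsum / Asum := by
    rw [hr, ← Real.rpow_natCast ((Bsum / Asum) ^ ((1:ℝ)/4)) 4,
      ← Real.rpow_mul (le_of_lt (div_pos hBpos hApos))]
    norm_num
  have hrC : ((r:ℂ)) ≠ 0 := by exact_mod_cast ne_of_gt hrpos
  refine ⟨(WithLp.toLp 2 (fun i => (r:ℂ) * a i) : EuclideanSpace ℂ (Fin n)),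
    (WithLp.toLp 2 (fun i => ((r:ℂ))⁻¹ * b' i) : EuclideanSpace ℂ (Fin n)), ?_, ?_, ?_⟩
  · have : ∑ i, ((r:ℂ) * a i) * (starRingEnd ℂ) ((r:ℂ)⁻¹ * b' i)
        = (r:ℂ) * (r:ℂ)⁻¹ * ∑ i, a i * (starRingEnd ℂ) (b' i) := by
      rw [Finset.mul_sum]
      refine Finset.sum_congr rfl fun i _ => ?_
      rw [map_mul, map_inv₀, Complex.conj_ofReal]
      ring
    rw [this, horth, mul_zero]
  · rw [EuclideanSpace.norm_eq, EuclideanSpace.norm_eq]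
    congr 1
    have h1 : ∑ i, ‖(r:ℂ) * a i‖ ^ 2 = r ^ 2 * Asum := by
      rw [hAsum, Finset.mul_sum]
      refine Finset.sum_congr rfl fun i _ => ?_
      rw [norm_mul, Complex.norm_real, Real.norm_of_nonneg hrpos.le]
      ring
    have h2 : ∑ i, ‖((r:ℂ))⁻¹ * b' i‖ ^ 2 = (r ^ 2)⁻¹ * Bsum := by
      rw [hBsum, Finset.mul_sum]
      refine Finset.sum_congr rfl fun i _ => ?_
      rw [norm_mul, norm_inv, Complex.norm_real, Real.norm_of_nonneg hrpos.le]
      ring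
    rw [h1, h2]
    have hB : Bsum = r ^ 4 * Asum := by
      rw [hr4, div_mul_cancel₀ _ (ne_of_gt hApos)]
    have hr0 : r ≠ 0 := ne_of_gt hrpos
    rw [hB]
    field_simp
  · intro i j
    have : ((r:ℂ) * a i) * ((r:ℂ))⁻¹ * b' j - ((r:ℂ) * a j) * ((r:ℂ))⁻¹ * b' i
        = a i * b' j - a j * b' i := by
      field_simp
    calc ((r:ℂ) * a i) * (((r:ℂ))⁻¹ * b' j) - ((r:ℂ) * a j) * (((r:ℂ))⁻¹ * b' i)
        = (r:ℂ) * (r:ℂ)⁻¹ * (a i * b' j - a j * b' i) := by ring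
      _ = a i * b' j - a j * b' i := by rw [mul_inv_cancel₀ hrC, one_mul]
      _ = a i * b j - a j * b i := hwedge i j
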